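/- Let θ ∈ ℝ and x ∈ {0,1}, and let ψ ∈ ℂ² be arbitrary. Then (id_{ℂ²} ⊗ φ_x)( (id_{ℂ²} ⊗ A_θᴴ) ( CNOT₂₁ (ψ ⊗ v₊) ) ) = (1/√2)·(−i)^x·exp(i·(θ + π/2)·x·X)·ψ, equivalently = (1/√2)·X^x·exp(i·θ·x·X)·ψ. (The factor (−i)^x is a global phase; the cited statement omits it.) -/
import Mathlib


open Finset Matrix

/-- The 2×2 matrix `exp(iφX) = [[cos φ, i sin φ],[i sin φ, cos φ]]`. -/
noncomputable def Rm (φ : ℝ) : Matrix (Fin 2) (Fin 2) ℂ :=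
  fun a b => if a = b then (Real.cos φ : ℂ) else Complex.I * (Real.sin φ : ℂ)

/-- The Pauli matrix `X = [[0,1],[1,0]]`. -/
def Xm : Matrix (Fin 2) (Fin 2) ℂ := fun a b => if a = b then 0 else 1

/-- The matrix `A_θ` with `A_θ e₀ = e₀` and `A_θ e₁ = exp(−iθX) e₁`. -/
noncomputable def Aθ (θ : ℝ) : Matrix (Fin 2) (Fin 2) ℂ :=
  fun a b => if b = 0 then (if a = 0 then 1 else 0) else Rm (-θ) a 1

/-- Tensor product `ψ ⊗ w ∈ ℂ² ⊗ ℂ²`, as a function of the two indices. -/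
noncomputable def tensor2 (ψ w : Fin 2 → ℂ) : Fin 2 → Fin 2 → ℂ :=
  fun a b => ψ a * w b

/-- `CNOT₂₁` (control qubit 2, target qubit 1): `e_a ⊗ e_b ↦ e_{a ⊕ b} ⊗ e_b`. -/
def cnot21 (v : Fin 2 → Fin 2 → ℂ) : Fin 2 → Fin 2 → ℂ :=
  fun a b => v (a + b) b

/-- Apply a matrix `M` to the second tensor factor: `id ⊗ M`. -/
noncomputable def applySnd (M : Matrix (Fin 2) (Fin 2) ℂ)
    (v : Fin 2 → Fin 2 → ℂ) : Fin 2 → Fin 2 → ℂ :=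
  fun a b => ∑ c, M b c * v a c

/-- The state `v₊ = (e₀ + e₁)/√2`. -/
noncomputable def vplus : Fin 2 → ℂ := fun _ => ((Real.sqrt 2 : ℝ) : ℂ)⁻¹

theorem stmt19 (θ : ℝ) (x : Fin 2) (ψ : Fin 2 → ℂ) :
    -- (id ⊗ φ_x) ((id ⊗ A_θᴴ) (CNOT₂₁ (ψ ⊗ v₊)))
    --   = (1/√2)·(−i)^x·exp(i(θ+π/2)xX)·ψ
    (fun a : Fin 2 => applySnd (Aθ θ)ᴴ (cnot21 (tensor2 ψ vplus)) a x)
      = (fun a : Fin 2 => ((Real.sqrt 2 : ℝ) : ℂ)⁻¹ * (-Complex.I) ^ (x : ℕ) *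
          (Rm ((θ + Real.pi / 2) * ((x : ℕ) : ℝ))).mulVec ψ a) ∧
    -- equivalently, = (1/√2)·X^x·exp(iθxX)·ψ
    (fun a : Fin 2 => applySnd (Aθ θ)ᴴ (cnot21 (tensor2 ψ vplus)) a x)
      = (fun a : Fin 2 => ((Real.sqrt 2 : ℝ) : ℂ)⁻¹ *
          ((Xm ^ (x : ℕ)) * Rm (θ * ((x : ℕ) : ℝ))).mulVec ψ a) := by
  constructor <;> funext a <;> fin_cases x <;> fin_cases a <;>
    simp [applySnd, Aθ, tensor2, cnot21, vplus, Rm, Xm, Matrix.mulVec, Matrix.mul_apply,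
      Fin.sum_univ_two, Matrix.conjTranspose_apply, dotProduct, pow_succ,
      Real.cos_add, Real.sin_add, Complex.ext_iff] <;>
    ring_nf <;>
    simp [Complex.ext_iff]
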